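/- Let G₁ and G₂ be finite simple graphs with n₁, n₂ vertices and m₁, m₂ edges. Then F(G₁ ⊙ G₂) = F(G₁) + n₁F(G₂) + 3n₂M₁(G₁) + 3n₁M₁(G₂) + 6n₂²m₁ + 6n₁m₂ + n₁n₂(n₂² + 1), where ⊙ is the corona product. -/

import Mathlib

open Finset

/-- Degree of a vertex: the number of its neighbors. -/
noncomputable def degN {V : Type*} (G : SimpleGraph V) (v : V) : ℕ :=
  Nat.card (G.neighborSet v)

/-- F-index: the sum of cubes of the vertex degrees. -/
noncomputable def Findex {V : Type*} [Fintype V] (G : SimpleGraph V) : ℕ :=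
  ∑ v, (degN G v) ^ 3

/-- First Zagreb index: the sum of squares of the vertex degrees. -/
noncomputable def zagrebM1 {V : Type*} [Fintype V] (G : SimpleGraph V) : ℕ :=
  ∑ v, (degN G v) ^ 2

/-- Number of edges of a graph. -/
noncomputable def numEdges {V : Type*} (G : SimpleGraph V) : ℕ :=
  Nat.card G.edgeSet

/-- Corona product of two simple graphs: one copy of `G₁` and, for each vertex
`i` of `G₁`, a copy of `G₂` whose vertices are all joined to `i`. -/
def graphCorona {V₁ V₂ : Type*} (G₁ : SimpleGraph V₁) (G₂ : SimpleGraph V₂) :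
    SimpleGraph (V₁ ⊕ V₁ × V₂) where
  Adj x y :=
    match x, y with
    | .inl u, .inl v => G₁.Adj u v
    | .inl u, .inr p => u = p.1
    | .inr p, .inl u => p.1 = u
    | .inr p, .inr q => p.1 = q.1 ∧ G₂.Adj p.2 q.2
  symm := by
    constructor
    rintro (u | p) (v | q) h
    · exact h.symm
    · exact h.symm
    · exact h.symm
    · exact ⟨h.1.symm, h.2.symm⟩
  loopless := by
    constructor
    rintro (u | p) h
    · exact G₁.loopless.irrefl u h
    · exact G₂.loopless.irrefl p.2 h.2

/-- The handshake lemma: the sum of degrees is twice the number of edges. -/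
lemma sum_degN_eq {V : Type*} [Fintype V] (G : SimpleGraph V) :
    ∑ v, degN G v = 2 * numEdges G := by
  classical
  have h1 : ∀ v, degN G v = G.degree v := by
    intro v
    rw [degN, Nat.card_eq_fintype_card, SimpleGraph.card_neighborSet_eq_degree]
  have h2 : numEdges G = G.edgeFinset.card := by
    rw [numEdges, Nat.card_eq_fintype_card, ← SimpleGraph.edgeFinset_card]
  simp only [h1, h2]
  exact SimpleGraph.sum_degrees_eq_twice_card_edges G

/-- Degree of a `G₁`-vertex in the corona product. -/
lemma degN_corona_inl {V₁ V₂ : Type*} [Fintype V₁] [Fintype V₂]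
    (G₁ : SimpleGraph V₁) (G₂ : SimpleGraph V₂) (u : V₁) :
    degN (graphCorona G₁ G₂) (Sum.inl u) = degN G₁ u + Fintype.card V₂ := by
  classical
  have hinj2 : Function.Injective (fun w : V₂ => (u, w)) :=
    fun x y h => congrArg Prod.snd h
  have hinl : (graphCorona G₁ G₂).neighborSet (Sum.inl u) =
      (Sum.inl '' G₁.neighborSet u) ∪ (Sum.inr '' ((fun w => (u, w)) '' Set.univ)) := by
    ext x
    rcases x with v | q
    · simp [SimpleGraph.mem_neighborSet, graphCorona]
    · simp [SimpleGraph.mem_neighborSet, graphCorona, eq_comm, Prod.ext_iff]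
  rw [degN, hinl, Nat.card_coe_set_eq,
    Set.ncard_union_eq (by simp [Set.disjoint_left]) (Set.toFinite _) (Set.toFinite _),
    Set.ncard_image_of_injective _ Sum.inl_injective,
    Set.ncard_image_of_injective _ Sum.inr_injective,
    Set.ncard_image_of_injective _ hinj2, Set.ncard_univ,
    degN, Nat.card_coe_set_eq, Nat.card_eq_fintype_card]

/-- Degree of a `G₂`-copy vertex in the corona product. -/
lemma degN_corona_inr {V₁ V₂ : Type*} [Fintype V₁] [Fintype V₂]
    (G₁ : SimpleGraph V₁) (G₂ : SimpleGraph V₂) (p : V₁ × V₂) :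
    degN (graphCorona G₁ G₂) (Sum.inr p) = degN G₂ p.2 + 1 := by
  classical
  have hinj2 : Function.Injective (fun w : V₂ => (p.1, w)) :=
    fun x y h => congrArg Prod.snd h
  have hinr : (graphCorona G₁ G₂).neighborSet (Sum.inr p) =
      ({Sum.inl p.1} : Set _) ∪ (Sum.inr '' ((fun w => (p.1, w)) '' G₂.neighborSet p.2)) := by
    ext x
    rcases x with v | q
    · simp [SimpleGraph.mem_neighborSet, graphCorona, eq_comm]
    · simp [SimpleGraph.mem_neighborSet, graphCorona, Prod.ext_iff, eq_comm]
      tauto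
  rw [degN, hinr, Nat.card_coe_set_eq,
    Set.ncard_union_eq (by simp [Set.disjoint_left]) (Set.toFinite _) (Set.toFinite _),
    Set.ncard_singleton,
    Set.ncard_image_of_injective _ Sum.inr_injective,
    Set.ncard_image_of_injective _ hinj2,
    degN, Nat.card_coe_set_eq, Nat.add_comm]

theorem Findex_corona {V₁ V₂ : Type*} [Fintype V₁] [Fintype V₂]
    (G₁ : SimpleGraph V₁) (G₂ : SimpleGraph V₂)
    (n₁ n₂ m₁ m₂ : ℕ) (hn₁ : Fintype.card V₁ = n₁) (hn₂ : Fintype.card V₂ = n₂)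
    (hm₁ : numEdges G₁ = m₁) (hm₂ : numEdges G₂ = m₂) :
    Findex (graphCorona G₁ G₂) =
      Findex G₁ + n₁ * Findex G₂ + 3 * n₂ * zagrebM1 G₁ + 3 * n₁ * zagrebM1 G₂
        + 6 * n₂ ^ 2 * m₁ + 6 * n₁ * m₂ + n₁ * n₂ * (n₂ ^ 2 + 1) := by
  classical
  have hs1 : ∑ v, degN G₁ v = 2 * m₁ := by rw [sum_degN_eq, hm₁]
  have hs2 : ∑ v, degN G₂ v = 2 * m₂ := by rw [sum_degN_eq, hm₂]
  have key : Findex (graphCorona G₁ G₂)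
      = (∑ u, (degN G₁ u + n₂) ^ 3) + n₁ * ∑ v, (degN G₂ v + 1) ^ 3 := by
    simp only [Findex, Fintype.sum_sum_type, Fintype.sum_prod_type, degN_corona_inl,
      degN_corona_inr, hn₂, Finset.sum_const, smul_eq_mul, Finset.card_univ, hn₁]
  have e1 : ∀ u, (degN G₁ u + n₂) ^ 3
      = degN G₁ u ^ 3 + 3 * n₂ * degN G₁ u ^ 2 + 3 * n₂ ^ 2 * degN G₁ u + n₂ ^ 3 := by
    intro u; ring
  have e2 : ∀ v, (degN G₂ v + 1) ^ 3
      = degN G₂ v ^ 3 + 3 * degN G₂ v ^ 2 + 3 * degN G₂ v + 1 := by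
    intro v; ring
  have f1 : ∑ u, degN G₁ u ^ 3 = Findex G₁ := rfl
  have f2 : ∑ v, degN G₂ v ^ 3 = Findex G₂ := rfl
  have z1 : ∑ u, degN G₁ u ^ 2 = zagrebM1 G₁ := rfl
  have z2 : ∑ v, degN G₂ v ^ 2 = zagrebM1 G₂ := rfl
  rw [key]
  simp only [e1, e2, Finset.sum_add_distrib, ← Finset.mul_sum, Finset.sum_const,
    smul_eq_mul, Finset.card_univ, hn₁, hn₂, mul_one]
  rw [hs1, hs2, f1, f2, z1, z2]
  ring
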